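/- Let L be the line (path) on [n], I_L its binomial edge ideal, g = x_1 y_n − x_n y_1, and J_G̃ the binomial edge ideal of the complete graph on [n]. Then I_L : (I_L : g) = J_G̃. -/

import Mathlib

open MvPolynomial CategoryTheory Opposite

noncomputable section

namespace BEIPaper

/-- The `x_i` variable of the polynomial ring `K[x_1,…,x_n,y_1,…,y_n]`,
which we realize as `MvPolynomial (σ ⊕ σ) K`, where `Sum.inl i ↦ x_i` and
`Sum.inr i ↦ y_i`. -/
def xv (K : Type) [Field K] {σ : Type} (i : σ) : MvPolynomial (σ ⊕ σ) K :=
  X (Sum.inl i)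

/-- The `y_i` variable. -/
def yv (K : Type) [Field K] {σ : Type} (i : σ) : MvPolynomial (σ ⊕ σ) K :=
  X (Sum.inr i)

/-- The binomial edge ideal of a graph `G` on the vertex set `[n]`:
generated by the binomials `x_i y_j - x_j y_i` for edges `{i, j}` with `i < j`. -/
def bei (K : Type) [Field K] {n : ℕ} (G : SimpleGraph (Fin n)) :
    Ideal (MvPolynomial (Fin n ⊕ Fin n) K) :=
  Ideal.span {f | ∃ i j : Fin n, i < j ∧ G.Adj i j ∧
    f = xv K i * yv K j - xv K j * yv K i}

/-- The prime ideal `P_T(G)`: generated by `{x_i, y_i : i ∈ T}` together with the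
binomial edge ideals of the complete graphs on the vertex sets of the connected
components of the induced subgraph of `G` on `[n] ∖ T` (equivalently, all binomials
`x_i y_j - x_j y_i` where `i < j` lie outside `T` in the same connected component). -/
def PT (K : Type) [Field K] {n : ℕ} (G : SimpleGraph (Fin n)) (T : Set (Fin n)) :
    Ideal (MvPolynomial (Fin n ⊕ Fin n) K) :=
  Ideal.span ((xv K '' T) ∪ (yv K '' T) ∪
    {f | ∃ i j : Fin n, ∃ (hi : i ∈ Tᶜ) (hj : j ∈ Tᶜ), i < j ∧
      (G.induce Tᶜ).Reachable ⟨i, hi⟩ ⟨j, hj⟩ ∧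
      f = xv K i * yv K j - xv K j * yv K i})

/-- `c(T)`: the number of connected components of the induced subgraph of `G`
on `[n] ∖ T`. -/
def ncomp {n : ℕ} (G : SimpleGraph (Fin n)) (T : Set (Fin n)) : ℕ :=
  Nat.card (G.induce Tᶜ).ConnectedComponent

/-- The graded (irrelevant) maximal ideal of a polynomial ring, generated by
all the variables. -/
def mIdeal (K : Type) [Field K] (σ : Type) : Ideal (MvPolynomial σ K) :=
  Ideal.span (Set.range X)

/-- The depth of a module `M` with respect to an ideal `I`: the supremum of lengths
of `M`-regular sequences consisting of elements of `I`. -/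
def depth {R : Type} [CommRing R] (I : Ideal R) (M : Type) [AddCommGroup M]
    [Module R M] : ℕ∞ :=
  sSup {k : ℕ∞ | ∃ rs : List R, (rs.length : ℕ∞) = k ∧ (∀ r ∈ rs, r ∈ I) ∧
    RingTheory.Sequence.IsRegular M rs}

/-- The (Krull) dimension of a module: the Krull dimension of `R` modulo the
annihilator of `M`. -/
def mdim (R : Type) [CommRing R] (M : Type) [AddCommGroup M] [Module R M] :
    WithBot ℕ∞ :=
  ringKrullDim (R ⧸ Module.annihilator R M)

/-- `M` is a Cohen-Macaulay `R`-module of dimension `d` (depth and dimension both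
being taken with respect to the given (maximal graded) ideal `I`). -/
def IsCMmodOfDim {R : Type} [CommRing R] (I : Ideal R) (M : Type) [AddCommGroup M]
    [Module R M] (d : ℕ) : Prop :=
  (depth I M : WithBot ℕ∞) = mdim R M ∧ mdim R M = (d : ℕ∞)

/-- The quotient `S/J` of a polynomial ring `S` by an ideal `J` is a Cohen-Macaulay
ring: its depth with respect to the graded maximal ideal equals its Krull dimension. -/
def IsCMQuot (K : Type) [Field K] {σ : Type} (J : Ideal (MvPolynomial σ K)) : Prop :=
  (depth (mIdeal K σ) (MvPolynomial σ K ⧸ J) : WithBot ℕ∞) =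
    ringKrullDim (MvPolynomial σ K ⧸ J)

/-- `S/I` is approximately Cohen-Macaulay: there is a homogeneous element `x` of
positive degree in the irrelevant ideal of `R = S/I` (i.e. the image of a homogeneous
polynomial `f` of positive degree) such that `R/x^m R = S/(I + (f^m))` is a
Cohen-Macaulay ring of dimension `dim R - 1` for all `m ≥ 1`. -/
def IsACM (K : Type) [Field K] {σ : Type} (I : Ideal (MvPolynomial σ K)) : Prop :=
  ∃ (d : ℕ) (f : MvPolynomial σ K), 0 < d ∧ f.IsHomogeneous d ∧
    ∀ m : ℕ, 1 ≤ m →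
      IsCMQuot K (I ⊔ Ideal.span {f ^ m}) ∧
      ringKrullDim (MvPolynomial σ K ⧸ (I ⊔ Ideal.span {f ^ m})) + 1 =
        ringKrullDim (MvPolynomial σ K ⧸ I)

/-- The Hilbert series of `S/I` (for a homogeneous ideal `I`), as a power series
over `ℤ`: the `m`-th coefficient is the `K`-dimension of the degree-`m` graded
component of `S/I`, i.e. of the image of the space of degree-`m` homogeneous
polynomials in `S/I`. -/
def hseries (K : Type) [Field K] {σ : Type} (I : Ideal (MvPolynomial σ K)) :
    PowerSeries ℤ :=
  PowerSeries.mk fun m =>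
    (Module.finrank K (Submodule.map (Ideal.Quotient.mkₐ K I).toLinearMap
      (homogeneousSubmodule σ K m)) : ℤ)

/-- The formal power series variable `t`. -/
def t : PowerSeries ℤ := PowerSeries.X

/-- The equidimensional part `U_S(I)` of (a minimal primary decomposition of) `I`:
the intersection of the primary components `I(p)` over the associated primes `p`
with `dim S/p = dim S/I`.  Any such `p` is a minimal prime of `I`, so its primary
component is independent of the decomposition and equals the saturation
`{x | ∃ s ∉ p, s * x ∈ I}`. -/
def USideal {R : Type} [CommRing R] (I : Ideal R) : Ideal R :=
  sInf {J | ∃ p ∈ associatedPrimes R (R ⧸ I),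
    ringKrullDim (R ⧸ p) = ringKrullDim (R ⧸ I) ∧
    J = Ideal.span {x | ∃ s ∉ p, s * x ∈ I}}

/-- `Ext_S^j(S/I, S)`, as an object of `ModuleCat S`.  The `i`-th module of
deficiency of `S/I` is `ω^i(S/I) = Ext_S^{2n-i}(S/I, S)`, i.e. `extSI K I (2*n - i)`. -/
def extSI (K : Type) [Field K] {σ : Type} (I : Ideal (MvPolynomial σ K)) (j : ℕ) :
    ModuleCat (MvPolynomial σ K) :=
  ((Ext (MvPolynomial σ K) (ModuleCat (MvPolynomial σ K)) j).obj
      (op (ModuleCat.of (MvPolynomial σ K) (MvPolynomial σ K ⧸ I)))).obj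
    (ModuleCat.of (MvPolynomial σ K) (MvPolynomial σ K))

/-- The line (path) graph on `[n]` (with `[n]` realized as `Fin n`), with edges
`{i, i+1}` for `1 ≤ i ≤ n-1`. -/
def lineG (n : ℕ) : SimpleGraph (Fin n) :=
  SimpleGraph.fromRel (fun a b => (b : ℕ) = (a : ℕ) + 1)

/-- The cycle of length `n` on `[n]` (with `[n]` realized as `Fin n`), with edges
`{i, i+1}` for `1 ≤ i ≤ n-1` together with `{1, n}`. -/
def cycleG (n : ℕ) : SimpleGraph (Fin n) :=
  SimpleGraph.fromRel (fun a b =>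
    (b : ℕ) = (a : ℕ) + 1 ∨ ((a : ℕ) = 0 ∧ (b : ℕ) = n - 1))

/-- The binomial `g = x_1 y_n - x_n y_1`. -/
def gElt (K : Type) [Field K] {n : ℕ} (hn : 0 < n) : MvPolynomial (Fin n ⊕ Fin n) K :=
  xv K ⟨0, hn⟩ * yv K ⟨n - 1, by omega⟩ - xv K ⟨n - 1, by omega⟩ * yv K ⟨0, hn⟩

/-- The `i`-th generator `x_2 x_3 ⋯ x_i y_{i+1} ⋯ y_{n-1}` (for `i = 1, …, n-1`)
of the monomial ideal `M`; the product ranges over the labels `p = 2, …, n-1`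
(`0`-indexed: `q = p - 1` with `1 ≤ q ≤ n-2`), taking `x_p` when `p ≤ i` and
`y_p` when `p > i`. -/
def mgen (K : Type) [Field K] (n : ℕ) (i : ℕ) : MvPolynomial (Fin n ⊕ Fin n) K :=
  ∏ q ∈ Finset.univ.filter (fun q : Fin n => 0 < (q : ℕ) ∧ (q : ℕ) < n - 1),
    (if (q : ℕ) + 1 ≤ i then xv K q else yv K q)

/-- The monomial ideal
`M = (x_2 x_3 ⋯ x_{n-1}, x_2 x_3 ⋯ x_{n-2} y_{n-1}, …, x_2 y_3 ⋯ y_{n-1}, y_2 y_3 ⋯ y_{n-1})`. -/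
def monoM (K : Type) [Field K] (n : ℕ) : Ideal (MvPolynomial (Fin n ⊕ Fin n) K) :=
  Ideal.span {f | ∃ i : ℕ, 1 ≤ i ∧ i ≤ n - 1 ∧ f = mgen K n i}

/-- The degree of a vertex, as the cardinality of its neighbor set. -/
def deg {n : ℕ} (G : SimpleGraph (Fin n)) (v : Fin n) : ℕ :=
  Nat.card (G.neighborSet v)

/-- A tree is 3-star like if no vertex has degree `≥ 4`, and either there is at most
one vertex of degree `3`, or there are exactly two vertices of degree `3` and they
are joined by an edge. -/
def ThreeStarLike {n : ℕ} (G : SimpleGraph (Fin n)) : Prop :=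
  (∀ v, deg G v ≤ 3) ∧
    ({v | deg G v = 3}.Subsingleton ∨
      ∃ a b : Fin n, a ≠ b ∧ G.Adj a b ∧ {v | deg G v = 3} = {a, b})

/-- The graph `G′` on `[n+1]` obtained from a graph `G` on `[n]` by attaching the
new edge `{v, n+1}` at the vertex `v` of `G`. -/
def extendG {n : ℕ} (G : SimpleGraph (Fin n)) (v : Fin n) : SimpleGraph (Fin (n + 1)) :=
  SimpleGraph.fromRel (fun a b =>
    (∃ (ha : a ≠ Fin.last n) (hb : b ≠ Fin.last n),
      G.Adj (a.castPred ha) (b.castPred hb)) ∨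
    (a = Fin.castSucc v ∧ b = Fin.last n))

/-- The inclusion `S = K[x_1,…,x_n,y_1,…,y_n] → S′ = K[x_1,…,x_{n+1},y_1,…,y_{n+1}]`. -/
def liftS (K : Type) [Field K] (n : ℕ) :
    MvPolynomial (Fin n ⊕ Fin n) K →ₐ[K] MvPolynomial (Fin (n + 1) ⊕ Fin (n + 1)) K :=
  rename (Sum.map Fin.castSucc Fin.castSucc)

-- ============ our development ============


variable {K : Type} [Field K] {n : ℕ}

/-- number of elements of `T` (as naturals) below `i`. -/
def cnt (T : Finset (Fin n)) (i : ℕ) : ℕ := (T.filter (fun t => t.val < i)).card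

/-- target variable index type: `c_i`'s, then `s_r`'s and `t_r`'s. -/
abbrev τ (n : ℕ) := Fin n ⊕ (ℕ ⊕ ℕ)

/-- image exponent of each source variable. -/
def wv (T : Finset (Fin n)) : (Fin n ⊕ Fin n) → (τ n →₀ ℕ)
  | Sum.inl i => Finsupp.single (Sum.inl i) 1 + Finsupp.single (Sum.inr (Sum.inl (cnt T i))) 1
  | Sum.inr i => Finsupp.single (Sum.inl i) 1 + Finsupp.single (Sum.inr (Sum.inr (cnt T i))) 1

def vtx : (Fin n ⊕ Fin n) → Fin n := Sum.elim id id

open Classical in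
/-- the homomorphism `φ_T`. -/
def phi (K : Type) [Field K] (T : Finset (Fin n)) :
    MvPolynomial (Fin n ⊕ Fin n) K →ₐ[K] MvPolynomial (τ n) K :=
  aeval (fun v => if vtx v ∈ T then 0 else monomial (wv T v) 1)

/-- image exponent of a whole monomial. -/
def W (T : Finset (Fin n)) (e : Fin n ⊕ Fin n →₀ ℕ) : τ n →₀ ℕ :=
  e.sum fun v c => c • wv T v

def good (T : Finset (Fin n)) (e : Fin n ⊕ Fin n →₀ ℕ) : Prop :=
  ∀ v, vtx v ∈ T → e v = 0

lemma W_apply (T : Finset (Fin n)) (e : Fin n ⊕ Fin n →₀ ℕ) (u : τ n) :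
    W T e u = ∑ v : Fin n ⊕ Fin n, e v * wv T v u := by
  rw [W, Finsupp.sum_apply]
  rw [Finsupp.sum]
  rw [Finset.sum_subset (Finset.subset_univ e.support)]
  · simp [Finsupp.smul_apply]
  · intro v _ hv
    simp [Finsupp.notMem_support_iff.mp hv]

lemma wv_at_c (T : Finset (Fin n)) (v : Fin n ⊕ Fin n) (i : Fin n) :
    wv T v (Sum.inl i) = if vtx v = i then 1 else 0 := by
  cases v <;> simp [wv, vtx, Finsupp.single_apply, eq_comm]

lemma W_at_c (T : Finset (Fin n)) (e : Fin n ⊕ Fin n →₀ ℕ) (i : Fin n) :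
    W T e (Sum.inl i) = e (Sum.inl i) + e (Sum.inr i) := by
  rw [W_apply]
  simp only [wv_at_c]
  rw [Fintype.sum_sum_type]
  simp [vtx, Finset.sum_ite_eq', mul_ite]
  rw [Finset.sum_eq_single i (fun b _ hb => by simp [hb]) (by simp),
    Finset.sum_eq_single i (fun b _ hb => by simp [hb]) (by simp)]
  simp

lemma wv_at_s (T : Finset (Fin n)) (v : Fin n ⊕ Fin n) (r : ℕ) :
    wv T v (Sum.inr (Sum.inl r)) =
      Sum.elim (fun i : Fin n => if cnt T i = r then 1 else 0) (fun _ => 0) v := by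
  cases v <;> simp [wv, Finsupp.single_apply, eq_comm]

lemma W_at_s (T : Finset (Fin n)) (e : Fin n ⊕ Fin n →₀ ℕ) (r : ℕ) :
    W T e (Sum.inr (Sum.inl r)) =
      ∑ i ∈ Finset.univ.filter (fun i : Fin n => cnt T i = r), e (Sum.inl i) := by
  rw [W_apply]
  simp only [wv_at_s]
  rw [Fintype.sum_sum_type]
  simp [Finset.sum_filter, mul_ite]


lemma prod_monomial_one {α : Type*} (S : Finset α) (g : α → (τ n →₀ ℕ)) :
    (∏ v ∈ S, (monomial (g v) (1 : K))) = monomial (∑ v ∈ S, g v) 1 := by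
  classical
  induction S using Finset.induction_on with
  | empty => simp
  | insert _ _ hnotmem ih =>
      rw [Finset.prod_insert hnotmem, Finset.sum_insert hnotmem, ih, monomial_mul, mul_one]

lemma phi_monomial_good (T : Finset (Fin n)) (e : Fin n ⊕ Fin n →₀ ℕ) (c : K)
    (h : good T e) : phi K T (monomial e c) = monomial (W T e) c := by
  classical
  rw [phi, aeval_monomial]
  have : (e.prod fun v k => (if vtx v ∈ T then 0 else monomial (wv T v) (1:K)) ^ k)
      = monomial (W T e) 1 := by
    rw [Finsupp.prod]
    have : ∀ v ∈ e.support,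
        (if vtx v ∈ T then 0 else monomial (wv T v) (1:K)) ^ (e v)
          = monomial ((e v) • wv T v) 1 := by
      intro v hv
      have hvT : vtx v ∉ T := fun hT => (Finsupp.mem_support_iff.mp hv) (h v hT)
      rw [if_neg hvT, monomial_pow, one_pow]
    rw [Finset.prod_congr rfl this, prod_monomial_one]
    rfl
  rw [this]
  rw [algebraMap_eq, C_mul_monomial, mul_one]

lemma phi_monomial_bad (T : Finset (Fin n)) (e : Fin n ⊕ Fin n →₀ ℕ) (c : K)
    (h : ¬ good T e) : phi K T (monomial e c) = 0 := by
  classical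
  rw [phi, aeval_monomial]
  simp only [good, not_forall] at h
  obtain ⟨v, hvT, hv⟩ := h
  have hmem : v ∈ e.support := Finsupp.mem_support_iff.mpr hv
  have : (e.prod fun v k => (if vtx v ∈ T then 0 else monomial (wv T v) (1:K)) ^ k) = 0 := by
    rw [Finsupp.prod]
    apply Finset.prod_eq_zero hmem
    rw [if_pos hvT, zero_pow hv]
  rw [this, mul_zero]

lemma phi_X (T : Finset (Fin n)) (v : Fin n ⊕ Fin n) :
    phi K T (X v) = if vtx v ∈ T then 0 else monomial (wv T v) 1 := by
  rw [phi, aeval_X]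


lemma phi_fij (T : Finset (Fin n)) (i j : Fin n)
    (h : i ∈ T ∨ j ∈ T ∨ cnt T i = cnt T j) :
    phi K T (xv K i * yv K j - xv K j * yv K i) = 0 := by
  classical
  rw [xv, yv, xv, yv, map_sub, map_mul, map_mul, phi_X, phi_X, phi_X, phi_X]
  simp only [vtx, Sum.elim_inl, Sum.elim_inr, id_eq]
  rcases h with hi | h
  · simp only [hi, if_true, zero_mul, mul_zero, sub_self]
  rcases h with hj | hc
  · simp only [hj, if_true, mul_zero, zero_mul, sub_self]
  by_cases hi : i ∈ T
  · simp only [hi, if_true, zero_mul, mul_zero, sub_self]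
  by_cases hj : j ∈ T
  · simp only [hj, if_true, mul_zero, zero_mul, sub_self]
  simp only [hi, hj, if_false]
  rw [monomial_mul, monomial_mul]
  have : wv T (Sum.inl i) + wv T (Sum.inr j) = wv T (Sum.inl j) + wv T (Sum.inr i) := by
    simp only [wv, hc]
    abel
  rw [this]
  simp

lemma bei_le {G : SimpleGraph (Fin n)} {I : Ideal (MvPolynomial (Fin n ⊕ Fin n) K)}
    (h : ∀ i j : Fin n, i < j → G.Adj i j → xv K i * yv K j - xv K j * yv K i ∈ I) :
    bei K G ≤ I := by
  rw [bei, Ideal.span_le]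
  rintro f ⟨i, j, hij, hadj, rfl⟩
  exact h i j hij hadj

lemma mem_bei {G : SimpleGraph (Fin n)} {i j : Fin n} (hij : i < j) (hadj : G.Adj i j) :
    xv K i * yv K j - xv K j * yv K i ∈ bei K G :=
  Ideal.subset_span ⟨i, j, hij, hadj, rfl⟩

lemma cnt_succ (T : Finset (Fin n)) (i : ℕ) (h : ∀ t ∈ T, t.val ≠ i) :
    cnt T (i + 1) = cnt T i := by
  unfold cnt
  congr 1
  apply Finset.filter_congr
  intro t ht
  have := h t ht
  omega

lemma line_adj_succ {i j : Fin n} (hij : i < j) (hadj : (lineG n).Adj i j) :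
    (j : ℕ) = (i : ℕ) + 1 := by
  rw [lineG, SimpleGraph.fromRel_adj] at hadj
  have : (i : ℕ) < (j : ℕ) := hij
  omega

lemma IL_le_ker (T : Finset (Fin n)) :
    bei K (lineG n) ≤ RingHom.ker (phi K T).toRingHom := by
  apply bei_le
  intro i j hij hadj
  have hs := line_adj_succ hij hadj
  rw [RingHom.mem_ker]
  apply phi_fij
  by_cases hi : i ∈ T
  · exact Or.inl hi
  by_cases hj : j ∈ T
  · exact Or.inr (Or.inl hj)
  refine Or.inr (Or.inr ?_)
  rw [hs, cnt_succ]
  intro t ht hti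
  exact hi (by rwa [show t = i from Fin.ext hti] at ht)

lemma Jtop_le_ker :
    bei K (⊤ : SimpleGraph (Fin n)) ≤ RingHom.ker (phi K (∅ : Finset (Fin n))).toRingHom := by
  apply bei_le
  intro i j hij _
  rw [RingHom.mem_ker]
  apply phi_fij
  refine Or.inr (Or.inr ?_)
  unfold cnt
  simp


def pot (e : Fin n ⊕ Fin n →₀ ℕ) : ℕ := ∑ i : Fin n, (n - i.val) * e (Sum.inl i)

lemma pot_add (e f : Fin n ⊕ Fin n →₀ ℕ) : pot (e + f) = pot e + pot f := by
  unfold pot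
  rw [← Finset.sum_add_distrib]
  apply Finset.sum_congr rfl
  intro i _
  simp [mul_add]

lemma pot_single_inl (i : Fin n) (k : ℕ) :
    pot (Finsupp.single (Sum.inl i) k) = (n - i.val) * k := by
  unfold pot
  rw [Finset.sum_eq_single i]
  · simp
  · intro b _ hb
    rw [Finsupp.single_apply, if_neg (by simp [hb.symm]), mul_zero]
  · simp

lemma pot_single_inr (i : Fin n) (k : ℕ) :
    pot (Finsupp.single (Sum.inr i) k) = 0 := by
  unfold pot
  apply Finset.sum_eq_zero
  intro b _
  rw [Finsupp.single_apply, if_neg (by simp), mul_zero]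

def Rnormal (R : ℕ → ℕ → Prop) (e : Fin n ⊕ Fin n →₀ ℕ) : Prop :=
  ∀ i j : Fin n, R i.val j.val → e (Sum.inl i) = 0 ∨ e (Sum.inr j) = 0

lemma step1_mono (I : Ideal (MvPolynomial (Fin n ⊕ Fin n) K)) (R : ℕ → ℕ → Prop)
    (hR : ∀ i j, R i j → i < j)
    (hgen : ∀ i j : Fin n, R i.val j.val → xv K i * yv K j - xv K j * yv K i ∈ I) :
    ∀ k, ∀ (e : Fin n ⊕ Fin n →₀ ℕ) (c : K), pot e ≤ k →
      ∃ r, monomial e c - r ∈ I ∧ ∀ e' ∈ r.support, Rnormal R e' := by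
  intro k
  induction k using Nat.strong_induction_on with
  | _ k ih =>
    intro e c hpot
    by_cases hnorm : Rnormal R e
    · refine ⟨monomial e c, by simp, ?_⟩
      intro e' he'
      rcases Finset.mem_of_subset support_monomial_subset he' with h
      rw [Finset.mem_singleton] at h
      rwa [h]
    · simp only [Rnormal, not_forall] at hnorm
      obtain ⟨i, j, hRij, hne⟩ := hnorm
      push_neg at hne
      obtain ⟨hi, hj⟩ := hne
      have hijlt : i.val < j.val := hR _ _ hRij
      set base : Fin n ⊕ Fin n →₀ ℕ :=
        e - Finsupp.single (Sum.inl i) 1 - Finsupp.single (Sum.inr j) 1 with hbase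
      have heq : base + Finsupp.single (Sum.inl i) 1 + Finsupp.single (Sum.inr j) 1 = e := by
        ext v
        have h1 : 1 ≤ e (Sum.inl i) := Nat.one_le_iff_ne_zero.mpr hi
        have h2 : 1 ≤ e (Sum.inr j) := Nat.one_le_iff_ne_zero.mpr hj
        rcases v with vi | vi
        · simp only [hbase, Finsupp.add_apply, Finsupp.tsub_apply, Finsupp.single_apply]
          by_cases hvi : Sum.inl i = (Sum.inl vi : Fin n ⊕ Fin n)
          · rw [if_pos hvi, if_neg (by simp)]
            rcases Sum.inl.inj hvi with h
            subst h
            omega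
          · rw [if_neg hvi, if_neg (by simp)]
            omega
        · simp only [hbase, Finsupp.add_apply, Finsupp.tsub_apply, Finsupp.single_apply]
          by_cases hvi : Sum.inr j = (Sum.inr vi : Fin n ⊕ Fin n)
          · rw [if_pos hvi, if_neg (by simp)]
            rcases Sum.inr.inj hvi with h
            subst h
            omega
          · rw [if_neg hvi, if_neg (by simp)]
            omega
      set e' : Fin n ⊕ Fin n →₀ ℕ :=
        base + Finsupp.single (Sum.inl j) 1 + Finsupp.single (Sum.inr i) 1 with he'
      have hmul : ∀ (a b : Fin n ⊕ Fin n) (w : Fin n ⊕ Fin n →₀ ℕ) (c : K),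
          monomial w c * (X a * X b) = monomial (w + Finsupp.single a 1 + Finsupp.single b 1) c := by
        intro a b w c
        rw [← pow_one (X a), ← pow_one (X b), X_pow_eq_monomial, X_pow_eq_monomial,
          monomial_mul, monomial_mul, mul_one, mul_one, add_assoc]
      have hkey : monomial e c - monomial e' c
          = monomial base c * (xv K i * yv K j - xv K j * yv K i) := by
        rw [xv, yv, xv, yv, mul_sub, hmul, hmul, heq, he']
      have hpote : pot e = pot base + (n - i.val) := by
        rw [← heq, pot_add, pot_add, pot_single_inl, pot_single_inr, mul_one, add_zero]
      have hpote' : pot e' = pot base + (n - j.val) := by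
        rw [he', pot_add, pot_add, pot_single_inl, pot_single_inr, mul_one, add_zero]
      have hjn : j.val < n := j.isLt
      have hlt : pot e' < pot e := by omega
      obtain ⟨r, hrI, hrn⟩ := ih (k - 1) (by omega) e' c (by omega)
      refine ⟨r, ?_, hrn⟩
      have : monomial e c - r = (monomial e c - monomial e' c) + (monomial e' c - r) := by ring
      rw [this, hkey]
      exact Ideal.add_mem I (Ideal.mul_mem_left I _ (hgen i j hRij)) hrI

lemma step1 (I : Ideal (MvPolynomial (Fin n ⊕ Fin n) K)) (R : ℕ → ℕ → Prop)
    (hR : ∀ i j, R i j → i < j)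
    (hgen : ∀ i j : Fin n, R i.val j.val → xv K i * yv K j - xv K j * yv K i ∈ I)
    (p : MvPolynomial (Fin n ⊕ Fin n) K) :
    ∃ r, p - r ∈ I ∧ ∀ e ∈ r.support, Rnormal R e := by
  classical
  have H : ∀ e : {x // x ∈ p.support},
      ∃ r, monomial e.val (coeff e.val p) - r ∈ I ∧ ∀ e' ∈ r.support, Rnormal R e' :=
    fun e => step1_mono I R hR hgen (pot e.val) e.val (coeff e.val p) le_rfl
  choose r hI hN using H
  refine ⟨∑ e ∈ p.support.attach, r e, ?_, ?_⟩
  · have hp : p = ∑ e ∈ p.support.attach, monomial e.val (coeff e.val p) := by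
      rw [Finset.sum_attach p.support (fun e => monomial e (coeff e p)),
        support_sum_monomial_coeff]
    have hps : p - ∑ e ∈ p.support.attach, r e
        = ∑ e ∈ p.support.attach, (monomial e.val (coeff e.val p) - r e) := by
      rw [Finset.sum_sub_distrib, ← hp]
    rw [hps]
    exact Ideal.sum_mem I fun e _ => hI e
  · intro e he
    rcases Finset.mem_of_subset MvPolynomial.support_sum he with h
    rw [Finset.mem_biUnion] at h
    obtain ⟨a, _, ha⟩ := h
    exact hN a e ha


section Comb
variable {N : ℕ}

lemma cntp_mono (t : ℕ → Prop) [DecidablePred t] {i j : ℕ} (h : i ≤ j) :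
    ((Finset.range i).filter t).card ≤ ((Finset.range j).filter t).card :=
  Finset.card_le_card (Finset.filter_subset_filter t (Finset.range_subset_range.mpr h))

lemma cntp_succ (t : ℕ → Prop) [DecidablePred t] (i : ℕ) :
    ((Finset.range (i+1)).filter t).card
      = ((Finset.range i).filter t).card + (if t i then 1 else 0) := by
  rw [Finset.range_add_one, Finset.filter_insert]
  split_ifs with h
  · rw [Finset.card_insert_of_notMem (by simp)]
  · rw [add_zero]

lemma aux_path (n : ℕ) (m a a' : ℕ → ℕ) (t : ℕ → Prop) (cnt' : ℕ → ℕ)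
    (hmono : ∀ i j : ℕ, i ≤ j → cnt' i ≤ cnt' j)
    (hsucc : ∀ i : ℕ, t i → cnt' (i+1) = cnt' i + 1)
    (ht : ∀ i, t i ↔ (0 < i ∧ i + 1 < n ∧ m i = 0))
    (ham : ∀ i, a i ≤ m i) (ham' : ∀ i, a' i ≤ m i)
    (hm0 : ∀ i, n ≤ i → m i = 0)
    (hnorm : ∀ i, i + 1 < n → a i = 0 ∨ a (i+1) = m (i+1))
    (hs : ∀ r : ℕ,
      ∑ i ∈ (Finset.range n).filter (fun i => cnt' i = r), a i
        = ∑ i ∈ (Finset.range n).filter (fun i => cnt' i = r), a' i)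
    (i₀ : ℕ) (hlt : ∀ j, j < i₀ → a j = a' j) (hgt : a' i₀ < a i₀) : False := by
  have hapos : 0 < a i₀ := by omega
  have hmpos : 0 < m i₀ := lt_of_lt_of_le hapos (ham i₀)
  have hin : i₀ < n := by
    by_contra h
    rw [hm0 i₀ (by omega)] at hmpos
    omega
  have key : ∀ j, i₀ < j → j < n → cnt' j = cnt' i₀ → a j = m j := by
    intro j
    induction j using Nat.strong_induction_on with
    | _ j ihj =>
      intro h1 h2 h3
      have hj1 : j - 1 + 1 = j := by omega
      have hcple : cnt' (j-1) ≤ cnt' i₀ := h3 ▸ hmono _ _ (by omega)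
      have hcpge : cnt' i₀ ≤ cnt' (j-1) := hmono _ _ (by omega)
      have hcp : cnt' (j-1) = cnt' i₀ := le_antisymm hcple hcpge
      have hnt : ¬ t (j-1) := by
        intro htj
        have h5 := hsucc (j-1) htj
        rw [hj1] at h5
        omega
      have hprev : a (j-1) ≠ 0 := by
        rcases Nat.lt_or_ge i₀ (j-1) with hc | hc
        · have hjm : a (j-1) = m (j-1) := ihj (j-1) (by omega) hc (by omega) hcp
          have : m (j-1) ≠ 0 := by
            intro hz
            exact hnt ((ht (j-1)).mpr ⟨by omega, by omega, hz⟩)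
          omega
        · have : j - 1 = i₀ := by omega
          rw [this]
          omega
      have := hnorm (j-1) (by omega)
      rw [hj1] at this
      exact this.resolve_left hprev
  have hsum := hs (cnt' i₀)
  have hlt' : ∑ i ∈ (Finset.range n).filter (fun i => cnt' i = cnt' i₀), a' i
      < ∑ i ∈ (Finset.range n).filter (fun i => cnt' i = cnt' i₀), a i := by
    apply Finset.sum_lt_sum
    · intro i hi
      rw [Finset.mem_filter, Finset.mem_range] at hi
      rcases Nat.lt_trichotomy i i₀ with hc | hc | hc
      · exact le_of_eq (hlt i hc).symm
      · subst hc; omega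
      · by_cases hti : t i
        · have : m i = 0 := ((ht i).mp hti).2.2
          have := ham' i
          omega
        · have : a i = m i := key i hc hi.1 hi.2
          have := ham' i
          omega
    · refine ⟨i₀, ?_, hgt⟩
      rw [Finset.mem_filter, Finset.mem_range]
      exact ⟨hin, rfl⟩
  rw [hsum] at hlt'
  exact lt_irrefl _ hlt'

lemma aux_complete (n : ℕ) (m a a' : ℕ → ℕ)
    (ham : ∀ i, a i ≤ m i) (ham' : ∀ i, a' i ≤ m i)
    (hm0 : ∀ i, n ≤ i → m i = 0)
    (hnorm : ∀ i j, i < j → j < n → a i = 0 ∨ a j = m j)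
    (hs : ∑ i ∈ Finset.range n, a i = ∑ i ∈ Finset.range n, a' i)
    (i₀ : ℕ) (hlt : ∀ j, j < i₀ → a j = a' j) (hgt : a' i₀ < a i₀) : False := by
  have hapos : 0 < a i₀ := by omega
  have hmpos : 0 < m i₀ := lt_of_lt_of_le hapos (ham i₀)
  have hin : i₀ < n := by
    by_contra h
    rw [hm0 i₀ (by omega)] at hmpos
    omega
  have key : ∀ j, i₀ < j → j < n → a j = m j := by
    intro j h1 h2
    exact (hnorm i₀ j h1 h2).resolve_left (by omega)
  have hlt' : ∑ i ∈ Finset.range n, a' i < ∑ i ∈ Finset.range n, a i := by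
    apply Finset.sum_lt_sum
    · intro i hi
      rw [Finset.mem_range] at hi
      rcases Nat.lt_trichotomy i i₀ with hc | hc | hc
      · exact le_of_eq (hlt i hc).symm
      · subst hc; omega
      · have : a i = m i := key i hc hi
        have := ham' i
        omega
    · exact ⟨i₀, Finset.mem_range.mpr hin, hgt⟩
  omega

end Comb


section Uniq

/-- natural-number version of the x-exponents -/
def aN (e : Fin n ⊕ Fin n →₀ ℕ) : ℕ → ℕ :=
  fun i => if h : i < n then e (Sum.inl ⟨i, h⟩) else 0

def bN (e : Fin n ⊕ Fin n →₀ ℕ) : ℕ → ℕ :=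
  fun i => if h : i < n then e (Sum.inr ⟨i, h⟩) else 0

/-- the cut set attached to a monomial: internal vertices not appearing in it -/
def Tof (e₀ : Fin n ⊕ Fin n →₀ ℕ) : Finset (Fin n) :=
  Finset.univ.filter (fun i => 0 < i.val ∧ i.val + 1 < n ∧ e₀ (Sum.inl i) + e₀ (Sum.inr i) = 0)

lemma good_Tof (e₀ : Fin n ⊕ Fin n →₀ ℕ) : good (Tof e₀) e₀ := by
  intro v hv
  rw [Tof, Finset.mem_filter] at hv
  have h := hv.2.2.2
  cases v with
  | inl i => simp only [vtx, Sum.elim_inl, id_eq] at *; omega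
  | inr i => simp only [vtx, Sum.elim_inr, id_eq] at *; omega

lemma cnt_mono (T : Finset (Fin n)) {i j : ℕ} (h : i ≤ j) : cnt T i ≤ cnt T j := by
  apply Finset.card_le_card
  intro x hx
  rw [Finset.mem_filter] at hx ⊢
  exact ⟨hx.1, by omega⟩

lemma cnt_mem_succ (T : Finset (Fin n)) (i : ℕ) (h : i < n) (hm : (⟨i, h⟩ : Fin n) ∈ T) :
    cnt T (i + 1) = cnt T i + 1 := by
  unfold cnt
  have : T.filter (fun x => x.val < i + 1)
      = insert (⟨i, h⟩ : Fin n) (T.filter (fun x => x.val < i)) := by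
    ext x
    simp only [Finset.mem_filter, Finset.mem_insert]
    constructor
    · rintro ⟨hx, hlt⟩
      rcases Nat.lt_or_ge x.val i with hc | hc
      · exact Or.inr ⟨hx, hc⟩
      · exact Or.inl (Fin.ext (by simp only [Fin.val_mk]; omega))
    · rintro (rfl | ⟨hx, hlt⟩)
      · exact ⟨hm, by simp only [Fin.val_mk]; omega⟩
      · exact ⟨hx, by omega⟩
  rw [this, Finset.card_insert_of_notMem (by simp)]

/-- the path relation -/
def Rpath : ℕ → ℕ → Prop := fun i j => j = i + 1

/-- the complete-graph relation -/
def Rcomp : ℕ → ℕ → Prop := fun i j => i < j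

lemma uniq_path (e e₀ : Fin n ⊕ Fin n →₀ ℕ)
    (hne : Rnormal Rpath e) (hn₀ : Rnormal Rpath e₀)
    (hgood : good (Tof e₀) e) (hW : W (Tof e₀) e = W (Tof e₀) e₀) : e = e₀ := by
  classical
  set T := Tof e₀ with hT
  set t : ℕ → Prop := fun i => 0 < i ∧ i + 1 < n ∧ aN e₀ i + bN e₀ i = 0 with htdef
  have hmem : ∀ (i : ℕ) (h : i < n), ((⟨i, h⟩ : Fin n) ∈ T ↔ t i) := by
    intro i h
    rw [hT, Tof, Finset.mem_filter]
    simp only [Finset.mem_univ, true_and, htdef, aN, bN, dif_pos h]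
  have hm : ∀ i : ℕ, aN e i + bN e i = aN e₀ i + bN e₀ i := by
    intro i
    by_cases h : i < n
    · have h2 : W T e (Sum.inl ⟨i, h⟩) = W T e₀ (Sum.inl ⟨i, h⟩) := by rw [hW]
      rw [W_at_c, W_at_c] at h2
      simpa [aN, bN, dif_pos h] using h2
    · simp [aN, bN, dif_neg h]
  have hgood₀ : good T e₀ := good_Tof e₀
  have hsucc : ∀ i : ℕ, t i → cnt T (i + 1) = cnt T i + 1 := by
    intro i hti
    have h : i < n := by omega
    exact cnt_mem_succ T i h ((hmem i h).mpr hti)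
  have hsums : ∀ r : ℕ, ∀ f : Fin n ⊕ Fin n →₀ ℕ,
      W T f (Sum.inr (Sum.inl r))
        = ∑ i ∈ (Finset.range n).filter (fun i => cnt T i = r), aN f i := by
    intro r f
    rw [W_at_s]
    rw [Finset.sum_filter, Finset.sum_filter]
    rw [← Fin.sum_univ_eq_sum_range (fun i => if cnt T i = r then aN f i else 0) n]
    apply Finset.sum_congr rfl
    intro i _
    simp [aN, i.isLt]
  have hs : ∀ r : ℕ,
      ∑ i ∈ (Finset.range n).filter (fun i => cnt T i = r), aN e i
        = ∑ i ∈ (Finset.range n).filter (fun i => cnt T i = r), aN e₀ i := by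
    intro r
    rw [← hsums r e, ← hsums r e₀, hW]
  have hnorm : ∀ (f : Fin n ⊕ Fin n →₀ ℕ), Rnormal Rpath f →
      ∀ i, i + 1 < n → aN f i = 0 ∨ bN f (i+1) = 0 := by
    intro f hf i hi
    have := hf ⟨i, by omega⟩ ⟨i+1, hi⟩ rfl
    simpa [aN, bN, dif_pos (show i < n by omega), dif_pos hi] using this
  have haa : ∀ i, aN e i = aN e₀ i := by
    by_contra hcon
    push_neg at hcon
    have hex : ∃ i, aN e i ≠ aN e₀ i := hcon
    set i₀ := Nat.find hex with hi₀
    have hlt : ∀ j, j < i₀ → aN e j = aN e₀ j := by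
      intro j hj
      by_contra hne'
      exact Nat.find_min hex hj hne'
    have hne₀ : aN e i₀ ≠ aN e₀ i₀ := Nat.find_spec hex
    have ham : ∀ i, aN e i ≤ aN e₀ i + bN e₀ i := fun i => by
      have := hm i; omega
    have ham' : ∀ i, aN e₀ i ≤ aN e₀ i + bN e₀ i := fun i => by omega
    have hm0 : ∀ i, n ≤ i → aN e₀ i + bN e₀ i = 0 := by
      intro i h
      simp [aN, bN, dif_neg (by omega : ¬ i < n)]
    have hmonoc : ∀ i j : ℕ, i ≤ j → cnt T i ≤ cnt T j := fun i j h => cnt_mono T h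
    have hteq : ∀ i, t i ↔ (0 < i ∧ i + 1 < n ∧ aN e₀ i + bN e₀ i = 0) := fun i => Iff.rfl
    rcases Nat.lt_or_ge (aN e₀ i₀) (aN e i₀) with hgt | hge
    · refine aux_path n (fun i => aN e₀ i + bN e₀ i) (aN e) (aN e₀) t (cnt T)
        hmonoc hsucc hteq ham ham' hm0 ?_ hs i₀ hlt hgt
      intro i hi
      rcases hnorm e hne i hi with h | h
      · exact Or.inl h
      · have hmi := hm (i+1)
        right
        show aN e (i+1) = aN e₀ (i+1) + bN e₀ (i+1)
        omega
    · have hgt' : aN e i₀ < aN e₀ i₀ := by omega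
      refine aux_path n (fun i => aN e₀ i + bN e₀ i) (aN e₀) (aN e) t (cnt T)
        hmonoc hsucc hteq ham' ham hm0 ?_ (fun r => (hs r).symm) i₀
        (fun j hj => (hlt j hj).symm) hgt'
      intro i hi
      rcases hnorm e₀ hn₀ i hi with h | h
      · exact Or.inl h
      · right
        show aN e₀ (i+1) = aN e₀ (i+1) + bN e₀ (i+1)
        omega
  have hbb : ∀ i, bN e i = bN e₀ i := by
    intro i
    have h1 := hm i
    have h2 := haa i
    omega
  ext v
  cases v with
  | inl i =>
      have := haa i.val
      simpa [aN, i.isLt] using this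
  | inr i =>
      have := hbb i.val
      simpa [bN, i.isLt] using this

lemma uniq_comp (e e₀ : Fin n ⊕ Fin n →₀ ℕ)
    (hne : Rnormal Rcomp e) (hn₀ : Rnormal Rcomp e₀)
    (hW : W (∅ : Finset (Fin n)) e = W ∅ e₀) : e = e₀ := by
  classical
  have hm : ∀ i : ℕ, aN e i + bN e i = aN e₀ i + bN e₀ i := by
    intro i
    by_cases h : i < n
    · have h2 : W ∅ e (Sum.inl ⟨i, h⟩) = W ∅ e₀ (Sum.inl ⟨i, h⟩) := by rw [hW]
      rw [W_at_c, W_at_c] at h2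
      simpa [aN, bN, dif_pos h] using h2
    · simp [aN, bN, dif_neg h]
  have hcnt0 : ∀ i : ℕ, cnt (∅ : Finset (Fin n)) i = 0 := by
    intro i; unfold cnt; simp
  have hsums : ∀ f : Fin n ⊕ Fin n →₀ ℕ,
      W (∅ : Finset (Fin n)) f (Sum.inr (Sum.inl 0)) = ∑ i ∈ Finset.range n, aN f i := by
    intro f
    rw [W_at_s]
    rw [← Fin.sum_univ_eq_sum_range (fun i => aN f i) n]
    rw [Finset.filter_true_of_mem (by intro i _; exact hcnt0 i.val)]
    apply Finset.sum_congr rfl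
    intro i _
    simp [aN, i.isLt]
  have hs : ∑ i ∈ Finset.range n, aN e i = ∑ i ∈ Finset.range n, aN e₀ i := by
    rw [← hsums e, ← hsums e₀, hW]
  have hnorm : ∀ (f : Fin n ⊕ Fin n →₀ ℕ), Rnormal Rcomp f →
      ∀ i j, i < j → j < n → aN f i = 0 ∨ bN f j = 0 := by
    intro f hf i j hij hj
    have := hf ⟨i, by omega⟩ ⟨j, hj⟩ hij
    simpa [aN, bN, dif_pos (show i < n by omega), dif_pos hj] using this
  have haa : ∀ i, aN e i = aN e₀ i := by
    by_contra hcon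
    push_neg at hcon
    have hex : ∃ i, aN e i ≠ aN e₀ i := hcon
    set i₀ := Nat.find hex with hi₀
    have hlt : ∀ j, j < i₀ → aN e j = aN e₀ j := by
      intro j hj
      by_contra hne'
      exact Nat.find_min hex hj hne'
    have hne₀ : aN e i₀ ≠ aN e₀ i₀ := Nat.find_spec hex
    have ham : ∀ i, aN e i ≤ aN e₀ i + bN e₀ i := fun i => by
      have := hm i; omega
    have ham' : ∀ i, aN e₀ i ≤ aN e₀ i + bN e₀ i := fun i => by omega
    have hm0 : ∀ i, n ≤ i → aN e₀ i + bN e₀ i = 0 := by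
      intro i h
      simp [aN, bN, dif_neg (by omega : ¬ i < n)]
    rcases Nat.lt_or_ge (aN e₀ i₀) (aN e i₀) with hgt | hge
    · refine aux_complete n (fun i => aN e₀ i + bN e₀ i) (aN e) (aN e₀)
        ham ham' hm0 ?_ hs i₀ hlt hgt
      intro i j hij hj
      rcases hnorm e hne i j hij hj with h | h
      · exact Or.inl h
      · have hmj := hm j
        right
        show aN e j = aN e₀ j + bN e₀ j
        omega
    · have hgt' : aN e i₀ < aN e₀ i₀ := by omega
      refine aux_complete n (fun i => aN e₀ i + bN e₀ i) (aN e₀) (aN e)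
        ham' ham hm0 ?_ hs.symm i₀ (fun j hj => (hlt j hj).symm) hgt'
      intro i j hij hj
      rcases hnorm e₀ hn₀ i j hij hj with h | h
      · exact Or.inl h
      · right
        show aN e₀ j = aN e₀ j + bN e₀ j
        omega
  have hbb : ∀ i, bN e i = bN e₀ i := by
    intro i
    have h1 := hm i
    have h2 := haa i
    omega
  ext v
  cases v with
  | inl i =>
      have := haa i.val
      simpa [aN, i.isLt] using this
  | inr i =>
      have := hbb i.val
      simpa [bN, i.isLt] using this

end Uniq


section Step2

lemma Tof_good (e₀ : Fin n ⊕ Fin n →₀ ℕ) :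
    ∀ t ∈ Tof e₀, 0 < t.val ∧ t.val + 1 < n := by
  intro t ht
  rw [Tof, Finset.mem_filter] at ht
  exact ⟨ht.2.1, ht.2.2.1⟩

lemma coeff_phi (T : Finset (Fin n)) (r : MvPolynomial (Fin n ⊕ Fin n) K)
    (e₀ : Fin n ⊕ Fin n →₀ ℕ) (he₀ : e₀ ∈ r.support) (hgood₀ : good T e₀)
    (huniq : ∀ e ∈ r.support, good T e → W T e = W T e₀ → e = e₀) :
    coeff (W T e₀) (phi K T r) = coeff e₀ r := by
  classical
  conv_lhs => rw [← support_sum_monomial_coeff r]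
  rw [map_sum, coeff_sum]
  rw [Finset.sum_eq_single e₀]
  · rw [phi_monomial_good T e₀ _ hgood₀, coeff_monomial, if_pos rfl]
  · intro e he hne
    by_cases hg : good T e
    · rw [phi_monomial_good T e _ hg, coeff_monomial]
      rw [if_neg]
      intro hWeq
      exact hne (huniq e he hg hWeq)
    · rw [phi_monomial_bad T e _ hg, coeff_zero]
  · intro h
    exact absurd he₀ h

lemma step2_path (r : MvPolynomial (Fin n ⊕ Fin n) K)
    (hr : ∀ e ∈ r.support, Rnormal Rpath e)
    (hker : ∀ T : Finset (Fin n), (∀ t ∈ T, 0 < t.val ∧ t.val + 1 < n) → phi K T r = 0) :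
    r = 0 := by
  classical
  by_contra hr0
  obtain ⟨e₀, he₀⟩ := Finset.nonempty_iff_ne_empty.mpr
    (fun h => hr0 (support_eq_empty.mp h))
  have hc := coeff_phi (Tof e₀) r e₀ he₀ (good_Tof e₀)
    (fun e he hg hW => uniq_path e e₀ (hr e he) (hr e₀ he₀) hg hW)
  rw [hker (Tof e₀) (Tof_good e₀), coeff_zero] at hc
  exact (mem_support_iff.mp he₀) hc.symm

lemma good_empty (e : Fin n ⊕ Fin n →₀ ℕ) : good (∅ : Finset (Fin n)) e := by
  intro v hv
  simp at hv

lemma step2_comp (r : MvPolynomial (Fin n ⊕ Fin n) K)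
    (hr : ∀ e ∈ r.support, Rnormal Rcomp e)
    (hker : phi K (∅ : Finset (Fin n)) r = 0) : r = 0 := by
  classical
  by_contra hr0
  obtain ⟨e₀, he₀⟩ := Finset.nonempty_iff_ne_empty.mpr
    (fun h => hr0 (support_eq_empty.mp h))
  have hc := coeff_phi ∅ r e₀ he₀ (good_empty e₀)
    (fun e he hg hW => uniq_comp e e₀ (hr e he) (hr e₀ he₀) hW)
  rw [hker, coeff_zero] at hc
  exact (mem_support_iff.mp he₀) hc.symm

lemma IL_eq (p : MvPolynomial (Fin n ⊕ Fin n) K) :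
    p ∈ bei K (lineG n)
      ↔ ∀ T : Finset (Fin n), (∀ t ∈ T, 0 < t.val ∧ t.val + 1 < n) → phi K T p = 0 := by
  constructor
  · intro hp T _
    exact RingHom.mem_ker.mp (IL_le_ker T hp)
  · intro hp
    obtain ⟨r, hrI, hrn⟩ := step1 (bei K (lineG n)) Rpath
      (fun i j h => by simp only [Rpath] at h; omega)
      (fun i j hR => by
        simp only [Rpath] at hR
        apply mem_bei
        · exact Fin.lt_def.mpr (by omega)
        · rw [lineG, SimpleGraph.fromRel_adj]
          exact ⟨Fin.ne_of_val_ne (by omega), Or.inl hR⟩) p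
    have hrk : r = 0 := by
      apply step2_path r hrn
      intro T hT
      have h1 : phi K T (p - r) = 0 := RingHom.mem_ker.mp (IL_le_ker T hrI)
      have h2 := hp T hT
      rw [map_sub, h2] at h1
      linear_combination -h1
    have : p - r = p := by rw [hrk, sub_zero]
    rwa [this] at hrI

lemma J_eq (p : MvPolynomial (Fin n ⊕ Fin n) K) :
    p ∈ bei K (⊤ : SimpleGraph (Fin n)) ↔ phi K (∅ : Finset (Fin n)) p = 0 := by
  constructor
  · intro hp
    exact RingHom.mem_ker.mp (Jtop_le_ker hp)
  · intro hp
    obtain ⟨r, hrI, hrn⟩ := step1 (bei K (⊤ : SimpleGraph (Fin n))) Rcomp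
      (fun i j h => by simp only [Rcomp] at h; exact h)
      (fun i j hR => by
        simp only [Rcomp] at hR
        apply mem_bei
        · exact Fin.lt_def.mpr hR
        · rw [SimpleGraph.top_adj]
          exact Fin.ne_of_val_ne (by omega)) p
    have hrk : r = 0 := by
      apply step2_comp r hrn
      have h1 : phi K ∅ (p - r) = 0 := RingHom.mem_ker.mp (Jtop_le_ker hrI)
      rw [map_sub, hp] at h1
      linear_combination -h1
    have : p - r = p := by rw [hrk, sub_zero]
    rwa [this] at hrI

end Step2


section Final

lemma cnt_zero (T : Finset (Fin n)) : cnt T 0 = 0 := by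
  unfold cnt
  simp

lemma g_mem_ker_empty (hn : 0 < n) : phi K (∅ : Finset (Fin n)) (gElt K hn) = 0 := by
  rw [gElt]
  apply phi_fij
  refine Or.inr (Or.inr ?_)
  unfold cnt
  simp

lemma g_not_mem_ker (hn : 0 < n) (T : Finset (Fin n))
    (hT : ∀ t ∈ T, 0 < t.val ∧ t.val + 1 < n) (hne : T.Nonempty) :
    phi K T (gElt K hn) ≠ 0 := by
  have h0T : (⟨0, hn⟩ : Fin n) ∉ T := by
    intro h
    have := (hT _ h).1
    simp at this
  have hlT : (⟨n-1, by omega⟩ : Fin n) ∉ T := by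
    intro h
    have := (hT _ h).2
    simp only [Fin.val_mk] at this
    omega
  rw [gElt, xv, yv, xv, yv, map_sub, map_mul, map_mul, phi_X, phi_X, phi_X, phi_X]
  simp only [vtx, Sum.elim_inl, Sum.elim_inr, id_eq, h0T, hlT, if_false]
  rw [monomial_mul, monomial_mul, mul_one]
  intro heq
  rw [sub_eq_zero] at heq
  have hcoeff := congrArg (coeff (wv T (Sum.inl (⟨0, hn⟩ : Fin n))
    + wv T (Sum.inr (⟨n-1, by omega⟩ : Fin n)))) heq
  rw [coeff_monomial, if_pos rfl, coeff_monomial] at hcoeff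
  have hwne : wv T (Sum.inl (⟨n-1, by omega⟩ : Fin n)) + wv T (Sum.inr (⟨0, hn⟩ : Fin n))
      ≠ wv T (Sum.inl (⟨0, hn⟩ : Fin n)) + wv T (Sum.inr (⟨n-1, by omega⟩ : Fin n)) := by
    intro hw
    have := congrFun (congrArg (fun (f : τ n →₀ ℕ) => (f : τ n → ℕ)) hw)
      (Sum.inr (Sum.inl 0))
    simp only [Finsupp.coe_add, Pi.add_apply] at this
    rw [wv_at_s, wv_at_s, wv_at_s, wv_at_s] at this
    simp only [Sum.elim_inl, Sum.elim_inr] at this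
    have hc0 : cnt T ((⟨0, hn⟩ : Fin n) : ℕ) = 0 := by
      simp only [Fin.val_mk]
      exact cnt_zero T
    have hcl : cnt T ((⟨n-1, by omega⟩ : Fin n) : ℕ) ≠ 0 := by
      simp only [Fin.val_mk]
      have : T.filter (fun t => t.val < n - 1) = T := by
        apply Finset.filter_true_of_mem
        intro t ht
        have := (hT t ht).2
        omega
      unfold cnt
      rw [this]
      simp only [ne_eq, Finset.card_eq_zero]
      intro hTe
      rw [hTe] at hne
      exact Finset.not_nonempty_empty hne
    rw [if_pos hc0, if_neg hcl] at this
    simp at this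
  rw [if_neg hwne] at hcoeff
  exact one_ne_zero hcoeff

/-- the monomial `x_2 ⋯ x_{n-1}` (product of the internal `x`-variables). -/
def uElt (K : Type) [Field K] (n : ℕ) : MvPolynomial (Fin n ⊕ Fin n) K :=
  ∏ i ∈ Finset.univ.filter (fun i : Fin n => 0 < i.val ∧ i.val + 1 < n), xv K i

lemma u_mem_ker (T : Finset (Fin n)) (hT : ∀ t ∈ T, 0 < t.val ∧ t.val + 1 < n)
    (hne : T.Nonempty) : phi K T (uElt K n) = 0 := by
  obtain ⟨t, ht⟩ := hne
  rw [uElt, map_prod]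
  apply Finset.prod_eq_zero (i := t)
  · rw [Finset.mem_filter]
    exact ⟨Finset.mem_univ t, hT t ht⟩
  · rw [xv, phi_X, if_pos]
    exact ht

lemma u_not_mem_ker_empty : phi K (∅ : Finset (Fin n)) (uElt K n) ≠ 0 := by
  rw [uElt, map_prod]
  have : ∀ i ∈ Finset.univ.filter (fun i : Fin n => 0 < i.val ∧ i.val + 1 < n),
      phi K (∅ : Finset (Fin n)) (xv K i) = monomial (wv ∅ (Sum.inl i)) 1 := by
    intro i _
    rw [xv, phi_X, if_neg (Finset.notMem_empty _)]
  rw [Finset.prod_congr rfl this, prod_monomial_one]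
  intro h
  have := congrArg (coeff (∑ v ∈ Finset.univ.filter
    (fun i : Fin n => 0 < i.val ∧ i.val + 1 < n), wv ∅ (Sum.inl v))) h
  rw [coeff_monomial, if_pos rfl, coeff_zero] at this
  exact one_ne_zero this

lemma ug_mem (hn : 0 < n) : uElt K n * gElt K hn ∈ bei K (lineG n) := by
  rw [IL_eq]
  intro T hT
  rw [map_mul]
  rcases T.eq_empty_or_nonempty with rfl | hne
  · rw [g_mem_ker_empty hn, mul_zero]
  · rw [u_mem_ker T hT hne, zero_mul]

theorem statement10' (K : Type) [Field K] (n : ℕ) (hn : 0 < n) :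
    (bei K (lineG n)).colon ((bei K (lineG n)).colon (Ideal.span {gElt K hn})) =
      bei K (⊤ : SimpleGraph (Fin n)) := by
  ext r
  constructor
  · intro hr
    have hu1 : uElt K n ∈ (bei K (lineG n)).colon (Ideal.span {gElt K hn}) := by
      rw [Submodule.mem_colon]
      intro p hp
      rw [SetLike.mem_coe, Ideal.mem_span_singleton] at hp
      obtain ⟨c, rfl⟩ := hp
      rw [smul_eq_mul]
      have hring : uElt K n * (gElt K hn * c) = (uElt K n * gElt K hn) * c := by ring
      rw [hring]
      exact Ideal.mul_mem_right _ _ (ug_mem hn)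
    have hru : r * uElt K n ∈ bei K (lineG n) := by
      have := Submodule.mem_colon.mp hr (uElt K n) hu1
      rwa [smul_eq_mul] at this
    have hker : phi K (∅ : Finset (Fin n)) (r * uElt K n) = 0 :=
      (IL_eq _).mp hru ∅ (by simp)
    rw [map_mul] at hker
    rcases mul_eq_zero.mp hker with h | h
    · exact (J_eq r).mpr h
    · exact absurd h u_not_mem_ker_empty
  · intro hr
    rw [Submodule.mem_colon]
    intro p hp
    rw [smul_eq_mul, IL_eq]
    intro T hT
    rw [map_mul]
    rcases T.eq_empty_or_nonempty with rfl | hne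
    · rw [(J_eq r).mp hr, zero_mul]
    · have hpg : p * gElt K hn ∈ bei K (lineG n) := by
        have := Submodule.mem_colon.mp hp (gElt K hn) (Ideal.mem_span_singleton_self _)
        rwa [smul_eq_mul] at this
      have hQ : phi K T (p * gElt K hn) = 0 := (IL_eq _).mp hpg T hT
      rw [map_mul] at hQ
      rcases mul_eq_zero.mp hQ with h | h
      · rw [h, mul_zero]
      · exact absurd h (g_not_mem_ker hn T hT hne)

end Final


/-- Let `L` be the line (path) on `[n]`, `I_L` its binomial edge
ideal, `g = x_1 y_n − x_n y_1`, and `J_G̃` the binomial edge ideal of the complete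
graph on `[n]`.  Then `I_L : (I_L : g) = J_G̃`. -/
theorem statement10 (K : Type) [Field K] (n : ℕ) (hn : 0 < n) :
    (bei K (lineG n)).colon ((bei K (lineG n)).colon (Ideal.span {gElt K hn})) =
      bei K (⊤ : SimpleGraph (Fin n)) := by
  exact statement10' K n hn

end BEIPaper
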